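/- (Auxiliary recursion lemma) Suppose non-negative scalar sequences $\{a_t\}_{t\ge 0}$ and $\{e_t\}_{t\ge 0}$ satisfy, for a fixed $\bar{\tau} \in \mathbb{N}$: $a_t \le \rho' a_{t-\bar{\tau}} + \frac{b}{\bar{\tau}}\sum_{i=t-\bar{\tau}}^{t-1} a_i + c\sum_{i=t-\bar{\tau}}^{t-1} e_i + r$ for $t \ge \bar{\tau}$, and $a_t \le \rho'' a_0 + \frac{b}{\bar{\tau}}\sum_{i=0}^{t-1} a_i + c\sum_{i=0}^{t-1} e_i + r$ for $t < \bar{\tau}$, where $b, c, r, \rho''$ are non-negative constants with $b \le \rho'/4$ and $\rho' \in (0, 1/4)$. Then for all $t \in \mathbb{N}$, $a_t \le 20\rho''(1 - \frac{3\rho}{4\bar{\tau}})^t a_0 + 60c\sum_{i=0}^{t-1}(1-\frac{3\rho}{4\bar{\tau}})^{t-i} e_i + \frac{26r}{\rho}$, where $\rho := 1 - 2\rho'$. -/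

import Mathlib

set_option maxHeartbeats 1000000

theorem recursion_lemma
    (a e : ℕ → ℝ) (ha : ∀ t, 0 ≤ a t) (he : ∀ t, 0 ≤ e t)
    (τ : ℕ) (hτ : 1 ≤ τ)
    (ρ' b c r ρ'' : ℝ)
    (hb : 0 ≤ b) (hc : 0 ≤ c) (hr : 0 ≤ r) (hρ'' : 0 ≤ ρ'')
    (hbρ : b ≤ ρ' / 4) (hρ'0 : 0 < ρ') (hρ'14 : ρ' < 1 / 4)
    (h1 : ∀ t, τ ≤ t →
      a t ≤ ρ' * a (t - τ) + (b / τ) * ∑ i ∈ Finset.Ico (t - τ) t, a i +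
        c * ∑ i ∈ Finset.Ico (t - τ) t, e i + r)
    (h2 : ∀ t, t < τ →
      a t ≤ ρ'' * a 0 + (b / τ) * ∑ i ∈ Finset.range t, a i +
        c * ∑ i ∈ Finset.range t, e i + r) :
    ∀ t : ℕ,
      a t ≤ 20 * ρ'' * (1 - 3 * (1 - 2 * ρ') / (4 * τ)) ^ t * a 0 +
        60 * c * ∑ i ∈ Finset.range t, (1 - 3 * (1 - 2 * ρ') / (4 * τ)) ^ (t - i) * e i +
        26 * r / (1 - 2 * ρ') := by
  have hτR : (1:ℝ) ≤ (τ:ℝ) := by exact_mod_cast hτ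
  have hτ0 : (0:ℝ) < (τ:ℝ) := by linarith
  have hρ0 : (0:ℝ) < 1 - 2*ρ' := by linarith
  have hρ1 : 1 - 2*ρ' < 1 := by linarith
  obtain ⟨q, hqdef⟩ : ∃ q : ℝ, q = 1 - 3 * (1 - 2 * ρ') / (4 * (τ:ℝ)) := ⟨_, rfl⟩
  rw [show (1 - 3 * (1 - 2 * ρ') / (4 * (τ:ℝ))) = q from hqdef.symm]
  obtain ⟨D, hDdef⟩ : ∃ D : ℝ, D = 26 / (1 - 2*ρ') := ⟨_, rfl⟩
  rw [show 26 * r / (1 - 2 * ρ') = D * r by rw [hDdef]; ring]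
  have hu0 : 0 < 3 * (1 - 2 * ρ') / (4 * (τ:ℝ)) := by positivity
  have hu34 : 3 * (1 - 2 * ρ') / (4 * (τ:ℝ)) < 3/4 := by
    rw [div_lt_iff₀ (by positivity)]
    nlinarith
  have hq14 : 1/4 < q := by rw [hqdef]; linarith
  have hq0 : (0:ℝ) ≤ q := by linarith
  have hq1 : q ≤ 1 := by rw [hqdef]; linarith
  have h16 : (0:ℝ) < 1 + 6*ρ' := by linarith
  obtain ⟨K, hKdef⟩ : ∃ K : ℝ, K = 4/(1+6*ρ') := ⟨_, rfl⟩
  have hK0 : 0 < K := by rw [hKdef]; positivity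
  have hK4 : K ≤ 4 := by rw [hKdef, div_le_iff₀ h16]; nlinarith
  -- Bernoulli
  have hqτ : (1 + 6*ρ')/4 ≤ q ^ τ := by
    have hB := one_add_mul_le_pow (a := -(3 * (1 - 2 * ρ') / (4 * (τ:ℝ)))) (by nlinarith) τ
    have h1' : 1 + (τ:ℝ) * (-(3 * (1 - 2 * ρ') / (4 * (τ:ℝ)))) = (1 + 6*ρ')/4 := by
      field_simp
      ring
    have h2' : (1 + -(3 * (1 - 2 * ρ') / (4 * (τ:ℝ)))) = q := by
      rw [hqdef]; ring
    rw [h1', h2'] at hB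
    exact hB
  have hKτ : 1 ≤ K * q ^ τ := by
    have hh : K * ((1+6*ρ')/4) = 1 := by rw [hKdef]; field_simp
    nlinarith [hqτ]
  have hKm : ∀ m : ℕ, m ≤ τ → 1 ≤ K * q ^ m := by
    intro m hm
    have : q ^ τ ≤ q ^ m := pow_le_pow_of_le_one hq0 hq1 hm
    nlinarith
  have key : ∀ m n : ℕ, m ≤ n → n - m ≤ τ → q ^ m ≤ K * q ^ n := by
    intro m n hmn hnm
    have h1' := hKm _ hnm
    have h2' : q ^ m * (K * q ^ (n - m)) = K * q ^ n := by
      rw [mul_comm K, ← mul_assoc, ← pow_add, Nat.add_sub_cancel' hmn]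
      ring
    nlinarith [pow_nonneg hq0 m]
  -- scalar coefficient inequalities
  have hK' : K * (ρ' + b) ≤ 1 := by
    apply le_of_mul_le_mul_right ?_ h16
    have h1' : K * (ρ' + b) * (1 + 6*ρ') = 4 * (ρ' + b) := by
      rw [hKdef]; field_simp
    rw [h1', one_mul]; linarith
  have hK'' : K * (60*(ρ' + b) + 1) ≤ 60 := by
    apply le_of_mul_le_mul_right ?_ h16
    have h1' : K * (60*(ρ' + b) + 1) * (1 + 6*ρ') = 4 * (60*(ρ' + b) + 1) := by
      rw [hKdef]; field_simp
    rw [h1']; linarith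
  have hD26 : (26:ℝ) ≤ D := by
    rw [hDdef, le_div_iff₀ hρ0]; nlinarith
  have hD52 : D ≤ 52 := by
    rw [hDdef, div_le_iff₀ hρ0]; nlinarith
  have hD0 : (0:ℝ) ≤ D := by linarith
  have hF3 : (ρ' + b) * D + 1 ≤ D := by
    have g1 : (ρ' + b) * D ≤ (5/16) * D :=
      mul_le_mul_of_nonneg_right (by linarith) hD0
    linarith
  have hbD : b * D + 1 ≤ D := by
    have g1 : b * D ≤ (ρ'/4) * D := mul_le_mul_of_nonneg_right hbρ hD0
    have g2 : (ρ'/4) * D ≤ (ρ'/4) * 52 := mul_le_mul_of_nonneg_left hD52 (by linarith)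
    linarith
  intro t
  induction t using Nat.strong_induction_on with
  | _ t ih =>
  obtain ⟨E, hE⟩ : ∃ E : ℝ, E = ∑ i ∈ Finset.range t, q ^ (t - i) * e i := ⟨_, rfl⟩
  rw [show (∑ i ∈ Finset.range t, q ^ (t - i) * e i) = E from hE.symm]
  have hE0 : 0 ≤ E := by
    rw [hE]
    apply Finset.sum_nonneg
    intro i _
    exact mul_nonneg (pow_nonneg hq0 _) (he i)
  have hqt0 : 0 ≤ q ^ t := pow_nonneg hq0 t
  obtain ⟨C, hC⟩ : ∃ C : ℝ,
      C = 20*K*ρ''*q^t*(a 0) + 60*K*c*E + D*r := ⟨_, rfl⟩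
  have hC0 : 0 ≤ C := by
    rw [hC]
    have g1 : 0 ≤ 20*K*ρ''*q^t*(a 0) :=
      mul_nonneg (mul_nonneg (mul_nonneg (mul_nonneg (by norm_num) hK0.le) hρ'') hqt0) (ha 0)
    have g2 : 0 ≤ 60*K*c*E :=
      mul_nonneg (mul_nonneg (mul_nonneg (by norm_num) hK0.le) hc) hE0
    have g3 : 0 ≤ D*r := mul_nonneg hD0 hr
    linarith
  have hBle : ∀ i, i < t → t - i ≤ τ → a i ≤ C := by
    intro i hit hiτ
    have hai := ih i hit
    have hqi : q ^ i ≤ K * q ^ t := key i t (le_of_lt hit) hiτ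
    have hsum : ∑ j ∈ Finset.range i, q ^ (i - j) * e j ≤ K * E := by
      calc ∑ j ∈ Finset.range i, q ^ (i - j) * e j
          ≤ ∑ j ∈ Finset.range i, K * (q ^ (t - j) * e j) := by
            apply Finset.sum_le_sum
            intro j hj
            rw [Finset.mem_range] at hj
            have hk := key (i - j) (t - j) (by omega) (by omega)
            nlinarith [he j]
        _ ≤ ∑ j ∈ Finset.range t, K * (q ^ (t - j) * e j) := by
            apply Finset.sum_le_sum_of_subset_of_nonneg
              (Finset.range_subset_range.mpr (le_of_lt hit))
            intro j _ _
            exact mul_nonneg hK0.le (mul_nonneg (pow_nonneg hq0 _) (he j))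
        _ = K * E := by rw [hE, Finset.mul_sum]
    rw [hC]
    linarith [hai, mul_le_mul_of_nonneg_right hqi (mul_nonneg hρ'' (ha 0)),
      mul_le_mul_of_nonneg_left hsum (by linarith : (0:ℝ) ≤ 60*c)]
  have hew : ∀ i, i < t → t - i ≤ τ → e i ≤ K * (q ^ (t - i) * e i) := by
    intro i hit hiτ
    have h1' := hKm (t - i) hiτ
    nlinarith [he i]
  rcases le_or_gt τ t with htτ | htτ
  · -- big case : τ ≤ t
    have h1t := h1 t htτ
    have hsa : ∑ i ∈ Finset.Ico (t - τ) t, a i ≤ (τ:ℝ) * C := by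
      calc ∑ i ∈ Finset.Ico (t - τ) t, a i
          ≤ ∑ _i ∈ Finset.Ico (t - τ) t, C := by
            apply Finset.sum_le_sum
            intro i hi
            rw [Finset.mem_Ico] at hi
            exact hBle i hi.2 (by omega)
        _ = (τ:ℝ) * C := by
            rw [Finset.sum_const, Nat.card_Ico]
            rw [show t - (t - τ) = τ from by omega, nsmul_eq_mul]
    have hse : ∑ i ∈ Finset.Ico (t - τ) t, e i ≤ K * E := by
      calc ∑ i ∈ Finset.Ico (t - τ) t, e i
          ≤ ∑ i ∈ Finset.Ico (t - τ) t, K * (q ^ (t - i) * e i) := by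
            apply Finset.sum_le_sum
            intro i hi
            rw [Finset.mem_Ico] at hi
            exact hew i hi.2 (by omega)
        _ ≤ ∑ i ∈ Finset.range t, K * (q ^ (t - i) * e i) := by
            apply Finset.sum_le_sum_of_subset_of_nonneg
            · intro x hx
              rw [Finset.mem_Ico] at hx
              exact Finset.mem_range.mpr hx.2
            · intro j _ _
              exact mul_nonneg hK0.le (mul_nonneg (pow_nonneg hq0 _) (he j))
        _ = K * E := by rw [hE, Finset.mul_sum]
    have haτ : a (t - τ) ≤ C := hBle (t - τ) (by omega) (by omega)
    have hstep : a t ≤ (ρ' + b) * C + c * (K * E) + r := by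
      have hdiv : 0 ≤ b / (τ:ℝ) := by positivity
      have hbτ : (b / (τ:ℝ)) * ∑ i ∈ Finset.Ico (t - τ) t, a i ≤ b * C := by
        calc (b / (τ:ℝ)) * ∑ i ∈ Finset.Ico (t - τ) t, a i
            ≤ (b / (τ:ℝ)) * ((τ:ℝ) * C) := mul_le_mul_of_nonneg_left hsa hdiv
          _ = b * C := by field_simp
      have hce : c * ∑ i ∈ Finset.Ico (t - τ) t, e i ≤ c * (K * E) :=
        mul_le_mul_of_nonneg_left hse hc
      linarith [h1t, hbτ, hce, mul_le_mul_of_nonneg_left haτ (le_of_lt hρ'0)]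
    rw [hC] at hstep
    linarith [hstep,
      mul_le_mul_of_nonneg_right hK' (mul_nonneg (mul_nonneg hρ'' hqt0) (ha 0)),
      mul_le_mul_of_nonneg_right hK'' (mul_nonneg hc hE0),
      mul_le_mul_of_nonneg_right hF3 hr]
  · -- small case : t < τ
    have h2t := h2 t htτ
    have hqτt : q ^ τ ≤ q ^ t := pow_le_pow_of_le_one hq0 hq1 (le_of_lt htτ)
    have hPlo : (1 + 6*ρ')/4 ≤ q ^ t := le_trans hqτ hqτt
    have hPhi : q ^ t ≤ 1 := pow_le_one₀ hq0 hq1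
    have hsa : ∑ i ∈ Finset.range t, a i ≤ (t:ℝ) * C := by
      calc ∑ i ∈ Finset.range t, a i
          ≤ ∑ _i ∈ Finset.range t, C := by
            apply Finset.sum_le_sum
            intro i hi
            rw [Finset.mem_range] at hi
            exact hBle i hi (by omega)
        _ = (t:ℝ) * C := by rw [Finset.sum_const, Finset.card_range, nsmul_eq_mul]
    have hse : ∑ i ∈ Finset.range t, e i ≤ K * E := by
      calc ∑ i ∈ Finset.range t, e i
          ≤ ∑ i ∈ Finset.range t, K * (q ^ (t - i) * e i) := by
            apply Finset.sum_le_sum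
            intro i hi
            rw [Finset.mem_range] at hi
            exact hew i hi (by omega)
        _ = K * E := by rw [hE, Finset.mul_sum]
    have hstep : a t ≤ ρ'' * a 0 + b * C + c * (K * E) + r := by
      have hdiv : 0 ≤ b / (τ:ℝ) := by positivity
      have htle : (t:ℝ) / (τ:ℝ) ≤ 1 := by
        rw [div_le_one hτ0]
        exact_mod_cast le_of_lt htτ
      have hbτ : (b / (τ:ℝ)) * ∑ i ∈ Finset.range t, a i ≤ b * C := by
        calc (b / (τ:ℝ)) * ∑ i ∈ Finset.range t, a i
            ≤ (b / (τ:ℝ)) * ((t:ℝ) * C) := mul_le_mul_of_nonneg_left hsa hdiv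
          _ = (b * C) * ((t:ℝ) / (τ:ℝ)) := by ring
          _ ≤ (b * C) * 1 := mul_le_mul_of_nonneg_left htle (mul_nonneg hb hC0)
          _ = b * C := mul_one _
      have hce : c * ∑ i ∈ Finset.range t, e i ≤ c * (K * E) :=
        mul_le_mul_of_nonneg_left hse hc
      linarith
    -- coefficient for the a 0 term
    have hKb : K * b ≤ ρ' := by
      linarith [mul_le_mul_of_nonneg_right hK4 hb]
    have hKbP : K * b * q ^ t ≤ ρ' := by
      have g1 := mul_le_mul_of_nonneg_left hPhi (mul_nonneg hK0.le hb)
      linarith [hKb, g1]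
    have d1 : 1 + 20*K*b*(q ^ t) ≤ 20 * q ^ t := by linarith [hKbP, hPlo]
    have hK''' : K * (60*b + 1) ≤ 60 := by
      linarith [hK'', mul_nonneg hK0.le hρ'0.le]
    rw [hC] at hstep
    linarith [hstep,
      mul_le_mul_of_nonneg_right d1 (mul_nonneg hρ'' (ha 0)),
      mul_le_mul_of_nonneg_right hK''' (mul_nonneg hc hE0),
      mul_le_mul_of_nonneg_right hbD hr]
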